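/- Let G be a finite simple graph with star number γ(G) = k that admits a k-witness which is left-free or right-free, and let G' be the graph obtained from G by adding one new vertex adjacent to every vertex of G (a universal vertex). Then γ(G') = k. -/

import Mathlib

open SimpleGraph

/-- A `k`-witness for a simple graph `G`: a positive weight function `w` on the vertices
together with `k` increasingly ordered intervals `[a i, b i]` of positive reals such that
two distinct vertices are adjacent iff the sum of their weights lies in ⋃ i, [a i, b i]. -/
structure StarWitness {V : Type*} (G : SimpleGraph V) (k : ℕ) where
  w : V → ℝ
  a : Fin k → ℝ
  b : Fin k → ℝ
  w_pos : ∀ v, 0 < w v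
  a_pos : ∀ i, 0 < a i
  a_le_b : ∀ i, a i ≤ b i
  ordered : ∀ i j : Fin k, i < j → b i < a j
  adj_iff : ∀ u v : V, u ≠ v →
    (G.Adj u v ↔ ∃ i : Fin k, a i ≤ w u + w v ∧ w u + w v ≤ b i)

/-- The star number `γ(G)` of a graph `G`: the smallest positive integer `k` such that
`G` admits a `k`-witness (i.e. `G` is a star-`k`-PCG). -/
noncomputable def starNumber {V : Type*} (G : SimpleGraph V) : ℕ :=
  sInf {k | 0 < k ∧ Nonempty (StarWitness G k)}

/-- A witness is left-free if the weight of every non-edge exceeds `b 1` (the right endpoint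
of the first interval). -/
def StarWitness.LeftFree {V : Type*} {G : SimpleGraph V} {k : ℕ}
    (W : StarWitness G k) : Prop :=
  ∀ u v : V, u ≠ v → ¬ G.Adj u v → ∀ i : Fin k, (i : ℕ) = 0 → W.b i < W.w u + W.w v

/-- A witness is right-free if the weight of every non-edge is below `a k` (the left endpoint
of the last interval). -/
def StarWitness.RightFree {V : Type*} {G : SimpleGraph V} {k : ℕ}
    (W : StarWitness G k) : Prop :=
  ∀ u v : V, u ≠ v → ¬ G.Adj u v → ∀ i : Fin k, (i : ℕ) = k - 1 → W.w u + W.w v < W.a i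

/-- A witness is in normal form if all weights are pairwise distinct and no doubled weight
equals the sum of the weights of two distinct vertices. -/
def StarWitness.NormalForm {V : Type*} {G : SimpleGraph V} {k : ℕ}
    (W : StarWitness G k) : Prop :=
  Function.Injective W.w ∧
    ∀ x u₁ u₂ : V, u₁ ≠ u₂ → 2 * W.w x ≠ W.w u₁ + W.w u₂

/-- The graph obtained from `G` by adding one new universal vertex (`none`). -/
def addUniversal {V : Type*} (G : SimpleGraph V) : SimpleGraph (Option V) where
  Adj x y :=
    match x, y with
    | some u, some v => G.Adj u v
    | some _, none => True
    | none, some _ => True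
    | none, none => False
  symm := ⟨by
    rintro (_ | u) (_ | v) h
    · exact h
    · trivial
    · trivial
    · exact h.symm⟩
  loopless := ⟨by
    rintro (_ | u) h
    · exact h
    · exact G.irrefl h⟩

/-- Restricting a witness of `addUniversal G` to the old vertices gives a witness of `G`. -/
def restrictWitness {V : Type*} {G : SimpleGraph V} {n : ℕ}
    (W : StarWitness (addUniversal G) n) : StarWitness G n where
  w := fun v => W.w (some v)
  a := W.a
  b := W.b
  w_pos := fun v => W.w_pos _
  a_pos := W.a_pos
  a_le_b := W.a_le_b
  ordered := W.ordered
  adj_iff := fun u v huv =>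
    W.adj_iff (some u) (some v) (by simpa using huv)

/-- Mirroring a left-free witness gives a right-free witness. -/
lemma mirrorWitness {V : Type*} [Fintype V] {G : SimpleGraph V} {k : ℕ}
    (W : StarWitness G k) (hL : W.LeftFree) :
    ∃ W' : StarWitness G k, W'.RightFree := by
  obtain ⟨C0, hC0⟩ := Finite.exists_le W.w
  obtain ⟨C1, hC1⟩ := Finite.exists_le W.b
  set C : ℝ := max (max C0 C1) 0 + 1 with hCdef
  have hCpos : 0 < C := by
    have : (0 : ℝ) ≤ max (max C0 C1) 0 := le_max_right _ _
    rw [hCdef]; linarith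
  have hCw : ∀ v, W.w v < C := by
    intro v
    have h1 : W.w v ≤ max C0 C1 := (hC0 v).trans (le_max_left _ _)
    have h2 : max C0 C1 ≤ max (max C0 C1) 0 := le_max_left _ _
    rw [hCdef]; linarith
  have hCb : ∀ i, W.b i < C := by
    intro i
    have h1 : W.b i ≤ max C0 C1 := (hC1 i).trans (le_max_right _ _)
    have h2 : max C0 C1 ≤ max (max C0 C1) 0 := le_max_left _ _
    rw [hCdef]; linarith
  refine ⟨⟨fun v => C - W.w v, fun i => 2 * C - W.b i.rev, fun i => 2 * C - W.a i.rev,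
    ?_, ?_, ?_, ?_, ?_⟩, ?_⟩
  · intro v; have := hCw v; linarith
  · intro i; have := hCb i.rev; linarith
  · intro i; have := W.a_le_b i.rev; linarith
  · intro i j hij
    have h1 : j.rev < i.rev := by rwa [Fin.rev_lt_rev]
    have h2 := W.ordered j.rev i.rev h1
    linarith
  · intro u v huv
    rw [W.adj_iff u v huv]
    constructor
    · rintro ⟨i, h1, h2⟩
      refine ⟨i.rev, ?_, ?_⟩ <;> rw [Fin.rev_rev] <;> linarith
    · rintro ⟨i, h1, h2⟩
      exact ⟨i.rev, by linarith, by linarith⟩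
  · intro u v huv hnadj i hi
    have hk : 0 < k := i.pos
    have hrev : (i.rev : ℕ) = 0 := by
      have := Fin.val_rev i
      omega
    have := hL u v huv hnadj i.rev hrev
    dsimp only
    linarith

/-- A right-free witness extends to a witness of the graph with a universal vertex. -/
lemma extendWitness {V : Type*} [Fintype V] {G : SimpleGraph V} {k : ℕ} (hk : 0 < k)
    (W : StarWitness G k) (hR : W.RightFree) :
    Nonempty (StarWitness (addUniversal G) k) := by
  obtain ⟨M0, hM0⟩ := Finite.exists_le W.b
  obtain ⟨B0, hB0⟩ := Finite.exists_le W.w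
  set M : ℝ := max M0 0 + 1 with hMdef
  set B : ℝ := max B0 0 with hBdef
  have hMpos : 0 < M := by positivity
  have hBnn : 0 ≤ B := le_max_right _ _
  have hbM : ∀ i, W.b i < M := fun i =>
    lt_of_le_of_lt (le_trans (hM0 i) (le_max_left _ _)) (by linarith)
  have hwB : ∀ v, W.w v ≤ B := fun v => le_trans (hB0 v) (le_max_left _ _)
  set last : Fin k := ⟨k - 1, by omega⟩ with hlast
  set b' : Fin k → ℝ := fun i => if (i : ℕ) = k - 1 then M + B else W.b i with hb'
  have hb'ge : ∀ i, W.b i ≤ b' i := by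
    intro i
    simp only [hb']
    split
    · have := hbM i; linarith
    · exact le_refl _
  have hxsum : ∀ u : V, W.a last ≤ M + W.w u ∧ M + W.w u ≤ b' last := by
    intro u
    have h1 : W.a last ≤ W.b last := W.a_le_b last
    have h2 : W.b last < M := hbM last
    have h3 : 0 < W.w u := W.w_pos u
    have h4 : W.w u ≤ B := hwB u
    have h5 : b' last = M + B := by simp [hb', hlast]
    exact ⟨by linarith, by rw [h5]; linarith⟩
  refine ⟨⟨fun o => o.elim M W.w, W.a, b', ?_, W.a_pos, ?_, ?_, ?_⟩⟩
  · rintro (_ | v)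
    · exact hMpos
    · exact W.w_pos v
  · intro i; exact le_trans (W.a_le_b i) (hb'ge i)
  · intro i j hij
    have hij' : (i : ℕ) < (j : ℕ) := hij
    have hine : (i : ℕ) ≠ k - 1 := by omega
    have : b' i = W.b i := by simp [hb', hine]
    rw [this]; exact W.ordered i j hij
  · rintro (_ | u) (_ | v) hne
    · exact absurd rfl hne
    · constructor
      · intro _
        refine ⟨last, ?_⟩
        have := hxsum v
        simpa using this
      · intro _; trivial
    · constructor
      · intro _
        refine ⟨last, ?_⟩
        have := hxsum u
        simp only [Option.elim]
        constructor <;> [linarith [(hxsum u).1]; linarith [(hxsum u).2]]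
      · intro _; trivial
    · have hne' : u ≠ v := fun h => hne (by rw [h])
      have hadj : (addUniversal G).Adj (some u) (some v) ↔ G.Adj u v := Iff.rfl
      rw [hadj, W.adj_iff u v hne']
      simp only [Option.elim]
      constructor
      · rintro ⟨i, h1, h2⟩
        exact ⟨i, h1, le_trans h2 (hb'ge i)⟩
      · rintro ⟨i, h1, h2⟩
        by_cases hi : (i : ℕ) = k - 1
        · by_contra hnadj
          rw [← W.adj_iff u v hne'] at hnadj
          have hfree := hR u v hne' hnadj last rfl
          have : (i : Fin k) = last := Fin.ext (by simpa [hlast] using hi)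
          rw [this] at h1
          linarith
        · have : b' i = W.b i := by simp [hb', hi]
          rw [this] at h2
          exact ⟨i, h1, h2⟩

/-- Theorem 9 (free case): if a graph with star number `k` has a free `k`-witness, then
adding a universal vertex does not change the star number. -/
theorem stmt_7 {V : Type*} [Fintype V] (G : SimpleGraph V) (k : ℕ)
    (hg : starNumber G = k)
    (hfree : ∃ W : StarWitness G k, W.LeftFree ∨ W.RightFree) :
    starNumber (addUniversal G) = k := by
  classical
  have hsub : {n | 0 < n ∧ Nonempty (StarWitness (addUniversal G) n)} ⊆
      {n | 0 < n ∧ Nonempty (StarWitness G n)} := by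
    rintro n ⟨hn, ⟨W⟩⟩
    exact ⟨hn, ⟨restrictWitness W⟩⟩
  rcases Nat.eq_zero_or_pos k with hk | hk
  · subst hk
    have hS : {n | 0 < n ∧ Nonempty (StarWitness G n)} = ∅ := by
      by_contra h
      have hne : {n | 0 < n ∧ Nonempty (StarWitness G n)}.Nonempty :=
        Set.nonempty_iff_ne_empty.mpr h
      have hmem := Nat.sInf_mem hne
      rw [show sInf {n | 0 < n ∧ Nonempty (StarWitness G n)} = 0 from hg] at hmem
      exact absurd hmem.1 (lt_irrefl 0)
    have hS' : {n | 0 < n ∧ Nonempty (StarWitness (addUniversal G) n)} = ∅ :=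
      Set.subset_empty_iff.mp (hS ▸ hsub)
    unfold starNumber
    rw [hS', Nat.sInf_empty]
  · obtain ⟨W, hfree⟩ := hfree
    obtain ⟨W', hW'⟩ : ∃ W' : StarWitness G k, W'.RightFree := by
      rcases hfree with hL | hR
      · exact mirrorWitness W hL
      · exact ⟨W, hR⟩
    have hmem : k ∈ {n | 0 < n ∧ Nonempty (StarWitness (addUniversal G) n)} :=
      ⟨hk, extendWitness hk W' hW'⟩
    have h1 : starNumber (addUniversal G) ≤ k := Nat.sInf_le hmem
    have h2 : k ≤ starNumber (addUniversal G) := by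
      have hmem' := Nat.sInf_mem ⟨k, hmem⟩
      have h3 := Nat.sInf_le (hsub hmem')
      have hg' : sInf {n | 0 < n ∧ Nonempty (StarWitness G n)} = k := hg
      have h4 : starNumber (addUniversal G) =
          sInf {n | 0 < n ∧ Nonempty (StarWitness (addUniversal G) n)} := rfl
      omega
    omega
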